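/- For positive integers ℓ ≤ u with θ = u/ℓ, there exists an instance of the uniform model of HRT-MSLQ with strict residents' preference lists and two stable matchings N and M satisfying s(N) = θ + 1 and s(M) = 1. Concretely: residents r_1,…,r_u and r'_1,…,r'_u; hospitals h_1,…,h_u and x, all with quotas [ℓ,u]; r_i prefers x to h_i, r'_i accepts only x; h_i accepts only r_i; x is indifferent among all residents. Then N = {(r_i,h_i) : i} ∪ {(r'_i,x) : i} and M = {(r_i,x) : i} are stable, with s(N) = u/ℓ + 1 and s(M) = 1. -/

import Mathlib

/-- An instance of the Hospitals/Residents problem with ties, incomplete lists,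
and lower/upper quotas (HRT-MSLQ).  Preferences are given by rank functions
(smaller rank = more preferred); ties are allowed (equal ranks). -/
structure HRTInstance (R H : Type) [Fintype R] [DecidableEq R] [Fintype H] [DecidableEq H] where
  acc : R → H → Prop
  rRank : R → H → ℕ
  hRank : H → R → ℕ
  lq : H → ℕ
  uq : H → ℕ

namespace HRTInstance

variable {R H : Type} [Fintype R] [DecidableEq R] [Fintype H] [DecidableEq H]

/-- The set of residents assigned to hospital `h` by assignment `M`. -/
def assignees (M : R → Option H) (h : H) : Finset R :=
  Finset.univ.filter (fun r => M r = some h)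

/-- `M` is a matching: it respects acceptability and upper quotas. -/
def IsMatching (I : HRTInstance R H) (M : R → Option H) : Prop :=
  (∀ r h, M r = some h → I.acc r h) ∧ ∀ h, (assignees M h).card ≤ I.uq h

/-- `(r, h)` is a blocking pair for `M`. -/
def Blocks (I : HRTInstance R H) (M : R → Option H) (r : R) (h : H) : Prop :=
  I.acc r h ∧
  (M r = none ∨ ∃ h', M r = some h' ∧ I.rRank r h < I.rRank r h') ∧
  ((assignees M h).card < I.uq h ∨ ∃ r' ∈ assignees M h, I.hRank h r < I.hRank h r')

/-- `M` is a stable matching. -/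
def IsStable (I : HRTInstance R H) (M : R → Option H) : Prop :=
  I.IsMatching M ∧ ∀ r h, ¬ I.Blocks M r h

/-- The total satisfaction ratio (score) of `M`:
`s(M) = Σ_h min{1, |M(h)|/ℓ(h)}`, with score `1` when `ℓ(h) = 0`. -/
def score (I : HRTInstance R H) (M : R → Option H) : ℚ :=
  ∑ h, if I.lq h = 0 then 1
       else min 1 (((assignees M h).card : ℚ) / (I.lq h : ℚ))

end HRTInstance

/-- Residents `r_i = .inl i` and `r'_i = .inr i`; hospitals `h_i = .inl i` and `x = .inr ()`,
all with quotas `[ℓ,u]`.  `r_i` prefers `x` to `h_i`, `r'_i` accepts only `x`;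
`h_i` accepts only `r_i`; `x` is indifferent among all residents. -/
def I4 (l u : ℕ) : HRTInstance (Fin u ⊕ Fin u) (Fin u ⊕ Unit) where
  acc r h := match r, h with
    | .inl i, .inl j => i = j
    | .inl _, .inr _ => True
    | .inr _, .inl _ => False
    | .inr _, .inr _ => True
  rRank _ h := match h with
    | .inl _ => 1
    | .inr _ => 0
  hRank _ _ := 0
  lq _ := l
  uq _ := u

def N4 (u : ℕ) : (Fin u ⊕ Fin u) → Option (Fin u ⊕ Unit)
  | .inl i => some (.inl i)
  | .inr _ => some (.inr ())

def M4 (u : ℕ) : (Fin u ⊕ Fin u) → Option (Fin u ⊕ Unit)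
  | .inl _ => some (.inr ())
  | .inr _ => none

lemma N4_assign_inl (u : ℕ) (j : Fin u) :
    HRTInstance.assignees (N4 u) (Sum.inl j) = {Sum.inl j} := by
  ext r; cases r <;> simp [HRTInstance.assignees, N4, Sum.inl.injEq, eq_comm]

lemma N4_assign_inr (u : ℕ) :
    HRTInstance.assignees (N4 u) (Sum.inr ()) =
      Finset.univ.map ⟨Sum.inr, Sum.inr_injective⟩ := by
  ext r; simp only [HRTInstance.assignees, Finset.mem_filter]; cases r <;> simp [N4]

lemma M4_assign_inl (u : ℕ) (j : Fin u) :
    HRTInstance.assignees (M4 u) (Sum.inl j) = ∅ := by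
  ext r; simp only [HRTInstance.assignees, Finset.mem_filter]; cases r <;> simp [M4]

lemma M4_assign_inr (u : ℕ) :
    HRTInstance.assignees (M4 u) (Sum.inr ()) =
      Finset.univ.map ⟨Sum.inl, Sum.inl_injective⟩ := by
  ext r; simp only [HRTInstance.assignees, Finset.mem_filter]; cases r <;> simp [M4]

/-- In the uniform model there are two stable matchings with scores `θ + 1 = u/ℓ + 1`
and `1`, even with strict residents' preference lists. -/
theorem stmt_4 (l u : ℕ) (hl : 1 ≤ l) (hlu : l ≤ u) :
    (I4 l u).IsStable (N4 u) ∧ (I4 l u).IsStable (M4 u) ∧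
    (I4 l u).score (N4 u) = (u : ℚ) / (l : ℚ) + 1 ∧
    (I4 l u).score (M4 u) = 1 := by
  have hu : 1 ≤ u := hl.trans hlu
  have hl0 : (l : ℚ) ≠ 0 := by positivity
  have hle : (1 : ℚ) / l ≤ 1 := by
    rw [div_le_one (by positivity)]; exact_mod_cast hl
  have hule : (1 : ℚ) ≤ (u : ℚ) / l := by
    rw [le_div_iff₀ (by positivity)]; exact_mod_cast by simpa using hlu
  refine ⟨⟨⟨?_, ?_⟩, ?_⟩, ⟨⟨?_, ?_⟩, ?_⟩, ?_, ?_⟩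
  · rintro (i | i) (j | j) hr <;> simp_all [N4, I4]
  · rintro (j | j)
    · simp [N4_assign_inl, I4]; omega
    · cases j; simp [N4_assign_inr, I4]
  · rintro (i | i) (j | j) ⟨hacc, hpref, hroom⟩
    · simp_all [I4, N4]
    · rcases hroom with h | ⟨r', _, hr'⟩
      · cases j; rw [N4_assign_inr] at h; simp [I4] at h
      · simp [I4] at hr'
    · simp_all [I4]
    · simp_all [I4, N4]
  · rintro (i | i) (j | j) hr <;> simp_all [M4, I4]
  · rintro (j | j)
    · simp [M4_assign_inl, I4]
    · cases j; simp [M4_assign_inr, I4]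
  · rintro (i | i) (j | j) ⟨hacc, hpref, hroom⟩
    · simp_all [I4, M4]
    · simp_all [I4, M4]
    · simp_all [I4]
    · rcases hroom with h | ⟨r', _, hr'⟩
      · cases j; rw [M4_assign_inr] at h; simp [I4] at h
      · simp [I4] at hr'
  · rw [HRTInstance.score, Fintype.sum_sum_type]
    have h1 : ∀ j : Fin u,
        (if (I4 l u).lq (Sum.inl j) = 0 then (1:ℚ)
         else min 1 (((HRTInstance.assignees (N4 u) (Sum.inl j)).card : ℚ) / ((I4 l u).lq (Sum.inl j) : ℚ)))
        = 1 / l := by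
      intro j
      rw [N4_assign_inl]
      have hq : (I4 l u).lq (Sum.inl j) = l := rfl
      rw [hq, if_neg (by omega), Finset.card_singleton, Nat.cast_one]
      exact min_eq_right hle
    rw [Finset.sum_congr rfl (fun j _ => h1 j)]
    have h2 : ∀ j : Unit,
        (if (I4 l u).lq (Sum.inr j) = 0 then (1:ℚ)
         else min 1 (((HRTInstance.assignees (N4 u) (Sum.inr j)).card : ℚ) / ((I4 l u).lq (Sum.inr j) : ℚ)))
        = 1 := by
      rintro ⟨⟩
      rw [N4_assign_inr]
      simp [I4, min_eq_left hule, (by omega : l ≠ 0)]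
    rw [Finset.sum_congr rfl (fun j _ => h2 j)]
    simp [Finset.sum_const, Finset.card_univ]
    field_simp
  · rw [HRTInstance.score, Fintype.sum_sum_type]
    have h1 : ∀ j : Fin u,
        (if (I4 l u).lq (Sum.inl j) = 0 then (1:ℚ)
         else min 1 (((HRTInstance.assignees (M4 u) (Sum.inl j)).card : ℚ) / ((I4 l u).lq (Sum.inl j) : ℚ)))
        = 0 := by
      intro j
      rw [M4_assign_inl]
      have hq : (I4 l u).lq (Sum.inl j) = l := rfl
      rw [hq, if_neg (by omega)]
      simp
    rw [Finset.sum_congr rfl (fun j _ => h1 j)]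
    have h2 : ∀ j : Unit,
        (if (I4 l u).lq (Sum.inr j) = 0 then (1:ℚ)
         else min 1 (((HRTInstance.assignees (M4 u) (Sum.inr j)).card : ℚ) / ((I4 l u).lq (Sum.inr j) : ℚ)))
        = 1 := by
      rintro ⟨⟩
      rw [M4_assign_inr]
      simp [I4, min_eq_left hule, (by omega : l ≠ 0)]
    rw [Finset.sum_congr rfl (fun j _ => h2 j)]
    simp
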